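/- Let G be a graph on n vertices with arboricity at most λ and d > 2λ. Removing the layer of smallest index from the subgraph induced by layers ≥ i decreases the number of vertices by a factor of at least d/(2λ): |L_{i+1} ∪ ... ∪ L_ℓ| ≤ (2λ/d)·|L_i ∪ ... ∪ L_ℓ|. -/

import Mathlib

def HasArboricityAtMost {V : Type*} (G : SimpleGraph V) (lam : ℕ) : Prop :=
  ∃ F : Fin lam → SimpleGraph V,
    (∀ i, (F i).IsAcyclic) ∧ (∀ i, F i ≤ G) ∧
    (∀ e ∈ G.edgeSet, ∃! i, e ∈ (F i).edgeSet)

/-- The greedy peeling process: `peel G d i` is the set of vertices in layers of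
index at least `i+1` (1-indexed). -/
def peel {V : Type*} [Fintype V] [DecidableEq V] (G : SimpleGraph V)
    [DecidableRel G.Adj] (d : ℕ) : ℕ → Finset V
  | 0 => Finset.univ
  | i + 1 => (peel G d i).filter (fun v => d < (G.neighborFinset v ∩ peel G d i).card)

open SimpleGraph Finset Walk in
/-- An acyclic graph on a finite vertex type has at most as many edges as vertices. -/
lemma acyclic_card_edgeFinset_le {V : Type*} [Fintype V] (G : SimpleGraph V)
    [Fintype G.edgeSet] (hG : G.IsAcyclic) : G.edgeFinset.card ≤ Fintype.card V := by
  classical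
  set root : V → V := fun w => (G.connectedComponentMk w).out with hroot_def
  have hreach : ∀ w, G.Reachable w (root w) := fun w =>
    (SimpleGraph.ConnectedComponent.exact (Quot.out_eq _)).symm
  have hrooteq : ∀ {x y : V}, G.Reachable x y → root x = root y := fun hxy =>
    congrArg Quot.out (SimpleGraph.ConnectedComponent.sound hxy)
  have key : ∀ w, ∃! p : G.Walk w (root w), p.IsPath := by
    intro w
    obtain ⟨q⟩ := hreach w
    exact ⟨(q.toPath : G.Path w (root w)).1, (q.toPath).2,
      fun p hp => congrArg Subtype.val (hG.path_unique ⟨p, hp⟩ q.toPath)⟩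
  choose f hf hf' using key
  have main : ∀ x y : V, G.Adj x y → (f x).length ≤ (f y).length →
      (f y).getVert 1 = x := by
    intro x y h hxy
    have hr : root x = root y := hrooteq h.reachable
    have hnot : y ∉ (f x).support := by
      intro hy
      have ht : (f x).takeUntil y hy = Walk.cons h Walk.nil := by
        have h1 : ((f x).takeUntil y hy).IsPath := (hf x).takeUntil hy
        have h2 : (Walk.cons h (Walk.nil : G.Walk y y)).IsPath := by
          simp [Walk.cons_isPath_iff, h.ne]
        exact congrArg Subtype.val (hG.path_unique ⟨_, h1⟩ ⟨_, h2⟩)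
      have hd : ((f x).dropUntil y hy).copy rfl hr = f y := by
        apply hf'
        show (((f x).dropUntil y hy).copy rfl hr).IsPath
        rw [Walk.isPath_copy]
        exact (hf x).dropUntil hy
      have hlen : (f x).length = 1 + (f y).length := by
        conv_lhs => rw [← Walk.take_spec (f x) hy]
        rw [Walk.length_append, ht, ← hd, Walk.length_copy]
        simp
      omega
    have hfy : f y = (Walk.cons h.symm (f x)).copy rfl hr := by
      refine (hf' y _ ?_).symm
      show ((Walk.cons h.symm (f x)).copy rfl hr).IsPath
      rw [Walk.isPath_copy]
      exact (hf x).cons hnot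
    rw [hfy, Walk.getVert_copy, Walk.getVert_cons_succ, Walk.getVert_zero]
  apply Finset.card_le_card_of_surjOn (fun w => s(w, (f w).getVert 1))
  intro e he
  simp only [Finset.coe_univ, Set.image_univ, Set.mem_range]
  induction e with
  | h x y =>
    rw [Finset.mem_coe, SimpleGraph.mem_edgeFinset, SimpleGraph.mem_edgeSet] at he
    rcases le_total (f x).length (f y).length with hle | hle
    · exact ⟨y, by rw [main x y he hle, Sym2.eq_swap]⟩
    · exact ⟨x, by rw [main y x he.symm hle]⟩

open SimpleGraph Finset in
lemma isAcyclic_induce {V : Type*} {G : SimpleGraph V} (h : G.IsAcyclic) (s : Set V) :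
    (G.induce s).IsAcyclic := by
  intro v c hc
  exact h (c.map (SimpleGraph.Embedding.induce s : G.induce s ↪g G).toHom)
    (hc.map (SimpleGraph.Embedding.induce s : G.induce s ↪g G).injective)

open SimpleGraph Finset in
/-- Total count of (ordered) adjacencies of an acyclic graph inside a finset `S`
is at most `2 * S.card`. -/
lemma acyclic_sum_le {V : Type*} [Fintype V] [DecidableEq V] (H : SimpleGraph V)
    [DecidableRel H.Adj] (hH : H.IsAcyclic) (S : Finset V) :
    ∑ v ∈ S, (H.neighborFinset v ∩ S).card ≤ 2 * S.card := by
  classical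
  set H' : SimpleGraph (↑(S : Set V)) := H.induce (S : Set V) with hH'
  have hdeg : ∀ x : ↑(S : Set V), H'.degree x = (H.neighborFinset ↑x ∩ S).card := by
    intro x
    rw [SimpleGraph.degree, SimpleGraph.neighborFinset]
    refine Finset.card_bij (fun w _ => (w : V)) ?_ ?_ ?_
    · intro a ha
      simp only [Set.mem_toFinset, SimpleGraph.mem_neighborSet] at ha
      simp only [Finset.mem_inter, SimpleGraph.mem_neighborFinset]
      exact ⟨ha, a.2⟩
    · intro a _ b _ hab
      exact Subtype.ext hab
    · intro b hb
      simp only [Finset.mem_inter, SimpleGraph.mem_neighborFinset] at hb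
      exact ⟨⟨b, hb.2⟩, by simp only [Set.mem_toFinset, SimpleGraph.mem_neighborSet]; exact hb.1, rfl⟩
  have hsum : ∑ v ∈ S, (H.neighborFinset v ∩ S).card = ∑ x : ↑(S : Set V), H'.degree x := by
    rw [← Finset.sum_coe_sort S (fun v => (H.neighborFinset v ∩ S).card)]
    apply Finset.sum_congr
    · congr 1
    · intro x _
      rw [hdeg]
  rw [hsum, SimpleGraph.sum_degrees_eq_twice_card_edges]
  have hcard := acyclic_card_edgeFinset_le H' (isAcyclic_induce hH (S : Set V))
  have : Fintype.card ↑(S : Set V) = S.card := by simp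
  omega

/-- removing the layer of smallest index from the subgraph induced by the
layers of index ≥ i decreases the number of vertices by a factor of at least
`d / (2 * lam)`: `|peel G d (i+1)| ≤ (2 * lam / d) * |peel G d i|`. -/
theorem H_partition_geometric_decay {V : Type*} [Fintype V] [DecidableEq V]
    (G : SimpleGraph V) [DecidableRel G.Adj] (lam d : ℕ)
    (harb : HasArboricityAtMost G lam) (hd : 2 * lam < d) :
    ∀ i : ℕ, ((peel G d (i + 1)).card : ℝ) ≤ ((2 * lam : ℝ) / d) * (peel G d i).card := by
  classical
  obtain ⟨F, hacyc, hle, huniq⟩ := harb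
  intro i
  set S := peel G d i with hS
  set T := peel G d (i + 1) with hT
  have hTS : T ⊆ S := Finset.filter_subset _ _
  -- each vertex of T has more than d neighbors in S
  have hdegT : ∀ v ∈ T, d + 1 ≤ (G.neighborFinset v ∩ S).card := by
    intro v hv
    rw [hT, peel, Finset.mem_filter, ← hS] at hv
    omega
  -- key natural-number inequality
  have hnat : d * T.card ≤ 2 * lam * S.card := by
    have h1 : (d + 1) * T.card ≤ ∑ v ∈ T, (G.neighborFinset v ∩ S).card := by
      calc (d + 1) * T.card = T.card * (d + 1) := by ring
      _ = ∑ _v ∈ T, (d + 1) := by rw [Finset.sum_const, smul_eq_mul]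
      _ ≤ ∑ v ∈ T, (G.neighborFinset v ∩ S).card := Finset.sum_le_sum hdegT
    have h3 : ∀ v : V, (G.neighborFinset v ∩ S).card ≤
        ∑ j : Fin lam, ((F j).neighborFinset v ∩ S).card := by
      intro v
      have hsub : G.neighborFinset v ∩ S ⊆
          Finset.univ.biUnion (fun j : Fin lam => (F j).neighborFinset v ∩ S) := by
        intro w hw
        rw [Finset.mem_inter, SimpleGraph.mem_neighborFinset] at hw
        obtain ⟨j, hj, _⟩ := huniq s(v, w) hw.1
        rw [SimpleGraph.mem_edgeSet] at hj
        refine Finset.mem_biUnion.2 ⟨j, Finset.mem_univ _, ?_⟩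
        rw [Finset.mem_inter, SimpleGraph.mem_neighborFinset]
        exact ⟨hj, hw.2⟩
      calc (G.neighborFinset v ∩ S).card
          ≤ (Finset.univ.biUnion (fun j : Fin lam => (F j).neighborFinset v ∩ S)).card :=
            Finset.card_le_card hsub
        _ ≤ ∑ j : Fin lam, ((F j).neighborFinset v ∩ S).card := Finset.card_biUnion_le
    have h4 : ∑ v ∈ T, (G.neighborFinset v ∩ S).card ≤ 2 * lam * S.card := by
      calc ∑ v ∈ T, (G.neighborFinset v ∩ S).card
          ≤ ∑ v ∈ S, (G.neighborFinset v ∩ S).card :=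
            Finset.sum_le_sum_of_subset hTS
        _ ≤ ∑ v ∈ S, ∑ j : Fin lam, ((F j).neighborFinset v ∩ S).card :=
            Finset.sum_le_sum (fun v _ => h3 v)
        _ = ∑ j : Fin lam, ∑ v ∈ S, ((F j).neighborFinset v ∩ S).card := Finset.sum_comm
        _ ≤ ∑ _j : Fin lam, 2 * S.card :=
            Finset.sum_le_sum (fun j _ => acyclic_sum_le (F j) (hacyc j) S)
        _ = lam * (2 * S.card) := by simp [Finset.sum_const]
        _ = 2 * lam * S.card := by ring
    calc d * T.card ≤ (d + 1) * T.card := by nlinarith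
      _ ≤ ∑ v ∈ T, (G.neighborFinset v ∩ S).card := h1
      _ ≤ 2 * lam * S.card := h4
  -- convert to the real inequality
  have hdpos : (0 : ℝ) < d := by
    have : 0 < d := by omega
    exact_mod_cast this
  rw [div_mul_eq_mul_div, le_div_iff₀ hdpos]
  have : ((d * T.card : ℕ) : ℝ) ≤ ((2 * lam * S.card : ℕ) : ℝ) := by exact_mod_cast hnat
  push_cast at this
  nlinarith [this]
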